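/- Let (Y, d) be a metric space, X a metrizable space, A a closed subset of X, and P a locally closed subset of Y equipped with equiconnecting data: an open subset Ω of P × P containing the diagonal and a continuous map λ : Ω × [0,1] → P such that λ(x,y,0) = x, λ(x,y,1) = y for all (x,y) ∈ Ω and λ(z,z,t) = z for all z ∈ P, t ∈ [0,1]. Let f : X → Y be a continuous map with f(X \ A) ⊆ P. Then for every cover 𝒰 of P by sets open in P there exists a cover 𝒱 of P by sets open in P such that every continuous map g : X → Y satisfying g|_A = f|_A, g(X \ A) ⊆ P and g|_{X \ A} 𝒱-close to f|_{X \ A} is 𝒰-homotopic to f in Y relative to A. -/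

import Mathlib

open Set Topology unitInterval

/-- The Hilbert cube `Q = [0,1]^ℕ`. -/
abbrev HilbertCube : Type := ℕ → unitInterval

/-- Two maps `f g : X → Y` are `𝒰`-close if every `x` admits `U ∈ 𝒰` containing
both `f x` and `g x`. -/
def UClose {X Y : Type} (𝒰 : Set (Set Y)) (f g : X → Y) : Prop :=
  ∀ x : X, ∃ U ∈ 𝒰, f x ∈ U ∧ g x ∈ U

/-- `𝒰` is a cover of `Y` by open sets. -/
def IsOpenCover {Y : Type} [TopologicalSpace Y] (𝒰 : Set (Set Y)) : Prop :=
  (∀ U ∈ 𝒰, IsOpen U) ∧ ⋃₀ 𝒰 = Set.univ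

/-- A closed set `Z ⊆ Y` is a `Z`-set: every map of the Hilbert cube into `Y` can be
approximated, with respect to any open cover, by maps omitting `Z`. -/
def IsZSet {Y : Type} [TopologicalSpace Y] (Z : Set Y) : Prop :=
  IsClosed Z ∧ ∀ u : HilbertCube → Y, Continuous u → ∀ 𝒰 : Set (Set Y), IsOpenCover 𝒰 →
    ∃ v : HilbertCube → Y, Continuous v ∧ Set.range v ⊆ Zᶜ ∧ UClose 𝒰 u v

/-- A `σ`-`Z`-set is a countable union of `Z`-sets. -/
def IsSigmaZSet {Y : Type} [TopologicalSpace Y] (B : Set Y) : Prop :=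
  ∃ Z : ℕ → Set Y, (∀ n, IsZSet (Z n)) ∧ B = ⋃ n, Z n

/-- A space is completely metrizable if some complete metric induces its topology. -/
def IsCompletelyMetrizable (X : Type) [t : TopologicalSpace X] : Prop :=
  ∃ m : MetricSpace X, m.toUniformSpace.toTopologicalSpace = t ∧
    @CompleteSpace X m.toUniformSpace

/-- `X` has a basis of open sets of cardinality at most `α`. -/
def HasWeightLE (X : Type) [TopologicalSpace X] (α : Cardinal) : Prop :=
  ∃ b : Set (Set X), TopologicalSpace.IsTopologicalBasis b ∧ Cardinal.mk b ≤ α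

/-- An `α`-manifold: a metrizable space admitting an open cover by sets homeomorphic to the
real Hilbert space `ℓ²(ι)` with an orthonormal basis indexed by a set `ι` of cardinality `α`. -/
def IsAlphaManifold (α : Cardinal) (M : Type) [TopologicalSpace M] : Prop :=
  TopologicalSpace.MetrizableSpace M ∧
  ∃ ι : Type, Cardinal.mk ι = α ∧
    ∃ 𝒞 : Set (Set M), (∀ U ∈ 𝒞, IsOpen U ∧ Nonempty (↥U ≃ₜ lp (fun _ : ι => ℝ) 2)) ∧
      ⋃₀ 𝒞 = Set.univ

/-- A Hilbert manifold: a metrizable space admitting an open cover by sets homeomorphic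
to some infinite-dimensional real Hilbert space. -/
def IsHilbertManifold (M : Type) [TopologicalSpace M] : Prop :=
  TopologicalSpace.MetrizableSpace M ∧
  ∃ 𝒞 : Set (Set M), (∀ U ∈ 𝒞, IsOpen U ∧
      ∃ ι : Type, Infinite ι ∧ Nonempty (↥U ≃ₜ lp (fun _ : ι => ℝ) 2)) ∧
    ⋃₀ 𝒞 = Set.univ

/-- `f : X → Y` is a `Z`-embedding into the subspace `M ⊆ Y`: it corestricts to a closed
embedding of `X` into `M` whose image is a `Z`-set in `M`. -/
def IsZEmbeddingInto {X Y : Type} [TopologicalSpace X] [TopologicalSpace Y]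
    (M : Set Y) (f : X → Y) : Prop :=
  ∃ g : X → ↥M, (∀ x, (g x : Y) = f x) ∧ Topology.IsClosedEmbedding g ∧
    IsZSet (Set.range g)

/-- A `𝒰`-homotopy: a continuous `F : X × I → Y` such that each track `F({x} × I)` is a
single point or lies in some member of `𝒰`. -/
def IsUHomotopy {X Y : Type} [TopologicalSpace X] [TopologicalSpace Y]
    (𝒰 : Set (Set Y)) (F : X × unitInterval → Y) : Prop :=
  Continuous F ∧ ∀ x : X, (∀ s t : unitInterval, F (x, s) = F (x, t)) ∨
    ∃ U ∈ 𝒰, ∀ t : unitInterval, F (x, t) ∈ U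

/-- `f` and `g` are `𝒰`-homotopic relative to `A`. -/
def UHomotopicRel {X Y : Type} [TopologicalSpace X] [TopologicalSpace Y]
    (𝒰 : Set (Set Y)) (A : Set X) (f g : X → Y) : Prop :=
  ∃ F : X × unitInterval → Y, IsUHomotopy 𝒰 F ∧
    (∀ x, F (x, 0) = f x) ∧ (∀ x, F (x, 1) = g x) ∧ ∀ a ∈ A, ∀ t, F (a, t) = f a

open Filter Metric in
/-- **Lemma (hom-ext).** If `P ⊆ Y` is locally closed and equiconnected, then maps that
agree with `f` on `A`, send `X \ A` into `P` and are `𝒱`-close to `f` off `A` are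
`𝒰`-homotopic to `f` in `Y` relative to `A`, for a suitable open cover `𝒱` of `P`. -/
theorem hom_ext_lemma
    (Y : Type) [MetricSpace Y]
    (X : Type) [TopologicalSpace X] [TopologicalSpace.MetrizableSpace X]
    (A : Set X) (hA : IsClosed A)
    (P : Set Y) (hP : IsLocallyClosed P)
    (Ω : Set (↥P × ↥P)) (hΩo : IsOpen Ω) (hΩd : ∀ z : ↥P, (z, z) ∈ Ω)
    (lam : ↥Ω × unitInterval → ↥P) (hlamc : Continuous lam)
    (hlam0 : ∀ w : ↥Ω, lam (w, 0) = w.1.1)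
    (hlam1 : ∀ w : ↥Ω, lam (w, 1) = w.1.2)
    (hlamd : ∀ (z : ↥P) (t : unitInterval), lam (⟨(z, z), hΩd z⟩, t) = z)
    (f : X → Y) (hf : Continuous f) (hfP : ∀ x ∉ A, f x ∈ P)
    (𝒰 : Set (Set ↥P)) (h𝒰 : IsOpenCover 𝒰) :
    ∃ 𝒱 : Set (Set ↥P), IsOpenCover 𝒱 ∧
      ∀ g : X → Y, Continuous g → (∀ a ∈ A, g a = f a) → (∀ x ∉ A, g x ∈ P) →
        (∀ x ∉ A, ∃ V ∈ 𝒱, f x ∈ Subtype.val '' V ∧ g x ∈ Subtype.val '' V) →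
        UHomotopicRel ((fun U : Set ↥P => (Subtype.val '' U : Set Y)) '' 𝒰) A f g := by
  classical
  set C : Set Y := closure P \ P with hCdef
  have hC : IsClosed C := by
    have h := hP.isOpen_coborder
    rwa [coborder, isOpen_compl_iff] at h
  -- data for each point of P
  have key : ∀ p : ↥P, ∃ (U : Set ↥P) (r δ : ℝ) (N : Set (↥P × ↥P)),
      U ∈ 𝒰 ∧ 0 < r ∧ 0 < δ ∧ δ ≤ r ∧
      Metric.ball p r ⊆ U ∧
      (∀ q ∈ C, 16 * r ≤ dist p.val q) ∧
      N ⊆ Ω ∧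
      (∀ (w : ↥P × ↥P) (hw : w ∈ Ω), w ∈ N → ∀ t, lam (⟨w, hw⟩, t) ∈ Metric.ball p r) ∧
      (∀ q1 q2 : ↥P, q1 ∈ Metric.ball p δ → q2 ∈ Metric.ball p δ → (q1, q2) ∈ N) := by
    intro p
    obtain ⟨U, hU𝒰, hpU⟩ : ∃ U ∈ 𝒰, p ∈ U := by
      have hp : p ∈ ⋃₀ 𝒰 := by rw [h𝒰.2]; trivial
      simpa using hp
    obtain ⟨ρ1, hρ1pos, hρ1⟩ := Metric.isOpen_iff.mp (h𝒰.1 U hU𝒰) p hpU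
    have hpC : p.val ∉ C := fun h => h.2 p.2
    obtain ⟨ρ2, hρ2pos, hρ2⟩ := Metric.isOpen_iff.mp hC.isOpen_compl p.val hpC
    set r : ℝ := min ρ1 (ρ2 / 16) with hrdef
    have hrpos : 0 < r := lt_min hρ1pos (by linarith)
    have hrU : Metric.ball p r ⊆ U := (Metric.ball_subset_ball (min_le_left _ _)).trans hρ1
    have hrρ2 : r ≤ ρ2 / 16 := min_le_right _ _
    have hrC : ∀ q ∈ C, 16 * r ≤ dist p.val q := by
      intro q hq
      by_contra h
      push_neg at h
      have hd : dist p.val q < ρ2 := by nlinarith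
      exact hρ2 (by rwa [Metric.mem_ball, dist_comm]) hq
    -- tube lemma
    have hsub : ({(⟨(p, p), hΩd p⟩ : ↥Ω)} : Set ↥Ω) ×ˢ (univ : Set unitInterval) ⊆
        lam ⁻¹' (Metric.ball p r) := by
      rintro ⟨w, t⟩ ⟨hw, -⟩
      simp only [mem_singleton_iff] at hw
      subst hw
      simp [hlamd, Metric.mem_ball, hrpos]
    obtain ⟨u, v, huo, hvo, hz0u, hunivv, huv⟩ :=
      generalized_tube_lemma isCompact_singleton isCompact_univ
        (Metric.isOpen_ball.preimage hlamc) hsub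
    obtain ⟨O, hOo, hOu⟩ := isOpen_induced_iff.mp huo
    have hppN : (p, p) ∈ O ∩ Ω := by
      constructor
      · have : (⟨(p, p), hΩd p⟩ : ↥Ω) ∈ u := hz0u rfl
        rw [← hOu] at this
        exact this
      · exact hΩd p
    obtain ⟨δ0, hδ0pos, hδ0⟩ := Metric.isOpen_iff.mp (hOo.inter hΩo) (p, p) hppN
    refine ⟨U, r, min δ0 r, O ∩ Ω, hU𝒰, hrpos, lt_min hδ0pos hrpos, min_le_right _ _,
      hrU, hrC, inter_subset_right, ?_, ?_⟩
    · intro w hw hN t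
      have hwu : (⟨w, hw⟩ : ↥Ω) ∈ u := by rw [← hOu]; exact hN.1
      exact huv (mk_mem_prod hwu (hunivv trivial))
    · intro q1 q2 h1 h2
      apply hδ0
      rw [← ball_prod_same]
      exact mk_mem_prod (Metric.ball_subset_ball (min_le_left _ _) h1)
        (Metric.ball_subset_ball (min_le_left _ _) h2)
  choose U r δ N hU𝒰 hrpos hδpos hδr hballU hrC hNΩ htrack hδN using key
  refine ⟨{V | ∃ p : ↥P, V = Metric.ball p (δ p)}, ⟨?_, ?_⟩, ?_⟩
  · rintro V ⟨p, rfl⟩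
    exact Metric.isOpen_ball
  · ext q
    simp only [mem_univ, iff_true, mem_sUnion]
    exact ⟨Metric.ball q (δ q), ⟨q, rfl⟩, Metric.mem_ball_self (hδpos q)⟩
  intro g hg hgA hgP hclose
  by_cases hall : ∀ x, x ∈ A
  · exact ⟨fun q => f q.1, ⟨hf.comp continuous_fst, fun x => Or.inl fun s t => rfl⟩,
      fun x => rfl, fun x => (hgA x (hall x)).symm, fun a _ t => rfl⟩
  push_neg at hall
  obtain ⟨x0, hx0⟩ := hall
  have hPne : f x0 ∈ P := hfP x0 hx0
  set p0 : ↥P := ⟨f x0, hPne⟩ with hp0def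
  set fP : X → ↥P := fun x => if h : f x ∈ P then ⟨f x, h⟩ else p0 with hfPdef
  set gPm : X → ↥P := fun x => if h : g x ∈ P then ⟨g x, h⟩ else p0 with hgPdef
  set M : (↥P × ↥P) × unitInterval → Y :=
    fun q => if h : q.1 ∈ Ω then (lam (⟨q.1, h⟩, q.2) : Y) else f x0 with hMdef
  set F : X × unitInterval → Y :=
    fun q => if q.1 ∈ A then f q.1 else M ((fP q.1, gPm q.1), q.2) with hFdef
  have hfPval : ∀ x, f x ∈ P → (fP x : Y) = f x := by
    intro x hx; rw [hfPdef]; simp [hx]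
  have hgPval : ∀ x, g x ∈ P → (gPm x : Y) = g x := by
    intro x hx; rw [hgPdef]; simp [hx]
  have hfPeq : ∀ x (h : f x ∈ P), fP x = ⟨f x, h⟩ := fun x h => Subtype.ext (hfPval x h)
  have hgPeq : ∀ x (h : g x ∈ P), gPm x = ⟨g x, h⟩ := fun x h => Subtype.ext (hgPval x h)
  have hMe : ∀ (w : ↥P × ↥P) (hw : w ∈ Ω) (t : unitInterval),
      M (w, t) = (lam (⟨w, hw⟩, t) : Y) := fun w hw t => dif_pos hw
  -- closeness data
  have hcl : ∀ x, x ∉ A →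
      ∃ p : ↥P, fP x ∈ Metric.ball p (δ p) ∧ gPm x ∈ Metric.ball p (δ p) := by
    intro x hx
    obtain ⟨V, ⟨p, rfl⟩, hfV, hgV⟩ := hclose x hx
    obtain ⟨qf, hqf, hqfe⟩ := hfV
    obtain ⟨qg, hqg, hqge⟩ := hgV
    refine ⟨p, ?_, ?_⟩
    · have : fP x = qf := Subtype.ext (by rw [hfPval x (hfP x hx), ← hqfe])
      rwa [this]
    · have : gPm x = qg := Subtype.ext (by rw [hgPval x (hgP x hx), ← hqge])
      rwa [this]
  choose pc hpcf hpcg using hcl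
  have hΦN : ∀ x (hx : x ∉ A), (fP x, gPm x) ∈ N (pc x hx) :=
    fun x hx => hδN (pc x hx) _ _ (hpcf x hx) (hpcg x hx)
  have hΦΩ : ∀ x (hx : x ∉ A), (fP x, gPm x) ∈ Ω :=
    fun x hx => hNΩ (pc x hx) (hΦN x hx)
  have htr : ∀ x (hx : x ∉ A) (t : unitInterval),
      lam (⟨(fP x, gPm x), hΦΩ x hx⟩, t) ∈ Metric.ball (pc x hx) (r (pc x hx)) :=
    fun x hx t => htrack (pc x hx) _ (hΦΩ x hx) (hΦN x hx) t
  -- continuity of M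
  have hMcont : ContinuousOn M (Ω ×ˢ (univ : Set unitInterval)) := by
    rw [continuousOn_iff_continuous_restrict]
    have heq : (Ω ×ˢ (univ : Set unitInterval)).restrict M =
        fun q : ↥(Ω ×ˢ (univ : Set unitInterval)) =>
          (lam (⟨q.val.1, q.prop.1⟩, q.val.2) : Y) := by
      funext q
      exact dif_pos q.prop.1
    show Continuous ((Ω ×ˢ (univ : Set unitInterval)).restrict M)
    rw [heq]
    exact continuous_subtype_val.comp (hlamc.comp (Continuous.prodMk
      (Continuous.subtype_mk (continuous_fst.comp continuous_subtype_val) _)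
      (continuous_snd.comp continuous_subtype_val)))
  have hMat : ∀ (w : ↥P × ↥P), w ∈ Ω → ∀ t : unitInterval, ContinuousAt M (w, t) :=
    fun w hw t => hMcont.continuousAt ((hΩo.prod isOpen_univ).mem_nhds ⟨hw, trivial⟩)
  -- tendsto lemma for corestrictions
  have subt : ∀ (h : X → Y) (hPm : X → ↥P), (∀ y, h y ∈ P → (hPm y : Y) = h y) →
      ∀ (l : Filter X) (x : X) (hx : h x ∈ P), Tendsto h l (𝓝 (h x)) →
      (∀ᶠ y in l, h y ∈ P) → Tendsto hPm l (𝓝 (⟨h x, hx⟩ : ↥P)) := by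
    intro h hPm hval l x hx hth hev
    rw [IsEmbedding.subtypeVal.tendsto_nhds_iff]
    exact Tendsto.congr' (hev.mono fun y hy => (hval y hy).symm) hth
  refine ⟨F, ⟨?_, ?_⟩, ?_, ?_, ?_⟩
  · -- continuity of F
    rw [continuous_iff_continuousAt]
    rintro ⟨x, t⟩
    by_cases hx : x ∈ A
    · -- boundary case
      have hFxt : F (x, t) = f x := by simp [hFdef, hx]
      rw [ContinuousAt, hFxt]
      have hsplit : 𝓝 (x, t) = 𝓝[A ×ˢ (univ : Set unitInterval)] (x, t) ⊔
          𝓝[(A ×ˢ (univ : Set unitInterval))ᶜ] (x, t) := by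
        rw [← nhdsWithin_union, union_compl_self, nhdsWithin_univ]
      rw [hsplit, tendsto_sup]
      constructor
      · refine Tendsto.congr' ?_ (((hf.comp continuous_fst).tendsto (x, t)).mono_left
          nhdsWithin_le_nhds)
        filter_upwards [self_mem_nhdsWithin] with q hq
        simp [hFdef, hq.1]
      · set l := 𝓝[(A ×ˢ (univ : Set unitInterval))ᶜ] (x, t) with hldef
        have ev : ∀ᶠ q in l, q.1 ∉ A := by
          filter_upwards [self_mem_nhdsWithin] with q hq
          intro h
          exact hq ⟨h, trivial⟩
        have hFeq : ∀ᶠ q in l, F q = M ((fP q.1, gPm q.1), q.2) := by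
          filter_upwards [ev] with q hq
          exact if_neg hq
        by_cases hfxP : f x ∈ P
        · -- interior-of-P case: use continuity of lam at the diagonal
          have hts : Tendsto (fun q : X × unitInterval => q.1) l (𝓝[Aᶜ] x) := by
            rw [tendsto_nhdsWithin_iff]
            exact ⟨(continuous_fst.tendsto _).mono_left nhdsWithin_le_nhds, ev⟩
          have hevP : ∀ᶠ y in 𝓝[Aᶜ] x, f y ∈ P := by
            filter_upwards [self_mem_nhdsWithin] with y hy
            exact hfP y hy
          have hevPg : ∀ᶠ y in 𝓝[Aᶜ] x, g y ∈ P := by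
            filter_upwards [self_mem_nhdsWithin] with y hy
            exact hgP y hy
          have hgxP : g x ∈ P := by rw [hgA x hx]; exact hfxP
          have hfPt : Tendsto fP (𝓝[Aᶜ] x) (𝓝 (⟨f x, hfxP⟩ : ↥P)) :=
            subt f fP hfPval _ x hfxP (hf.continuousAt.mono_left nhdsWithin_le_nhds) hevP
          have hgPt : Tendsto gPm (𝓝[Aᶜ] x) (𝓝 (⟨f x, hfxP⟩ : ↥P)) := by
            have := subt g gPm hgPval (𝓝[Aᶜ] x) x hgxP
              (hg.continuousAt.mono_left nhdsWithin_le_nhds) hevPg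
            have heq : (⟨g x, hgxP⟩ : ↥P) = ⟨f x, hfxP⟩ := Subtype.ext (hgA x hx)
            rwa [heq] at this
          have hΨ : Tendsto (fun q : X × unitInterval => ((fP q.1, gPm q.1), q.2)) l
              (𝓝 (((⟨f x, hfxP⟩ : ↥P), (⟨f x, hfxP⟩ : ↥P)), t)) :=
            ((hfPt.comp hts).prodMk_nhds (hgPt.comp hts)).prodMk_nhds
              ((continuous_snd.tendsto _).mono_left nhdsWithin_le_nhds)
          have hMv : M (((⟨f x, hfxP⟩ : ↥P), (⟨f x, hfxP⟩ : ↥P)), t) = f x := by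
            rw [hMe _ (hΩd ⟨f x, hfxP⟩) t, hlamd]
          have hco := Filter.Tendsto.comp (hMat _ (hΩd (⟨f x, hfxP⟩ : ↥P)) t) hΨ
          rw [hMv] at hco
          exact Tendsto.congr' (hFeq.mono fun q h => h.symm) hco
        · by_cases hfxcl : f x ∈ closure P
          · -- f x in the border: metric estimate
            have hfxC : f x ∈ C := ⟨hfxcl, hfxP⟩
            rw [Metric.tendsto_nhds]
            intro ε hε
            have hev2 : ∀ᶠ q in l, dist (f q.1) (f x) < ε / 2 := by
              have htf : Tendsto (fun q : X × unitInterval => f q.1) l (𝓝 (f x)) :=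
                ((hf.comp continuous_fst).tendsto _).mono_left nhdsWithin_le_nhds
              exact htf (Metric.ball_mem_nhds _ (by linarith))
            filter_upwards [ev, hev2] with q hq hq2
            have hFq : F q = (lam (⟨(fP q.1, gPm q.1), hΦΩ q.1 hq⟩, q.2) : Y) := by
              simp only [hFdef]
              rw [if_neg hq]
              exact hMe _ (hΦΩ q.1 hq) q.2
            have d1 : dist (F q) (pc q.1 hq).val < r (pc q.1 hq) := by
              rw [hFq]
              exact htr q.1 hq q.2
            have d2 : dist (f q.1) (pc q.1 hq).val < r (pc q.1 hq) := by
              have := Metric.ball_subset_ball (hδr (pc q.1 hq)) (hpcf q.1 hq)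
              rw [Metric.mem_ball, Subtype.dist_eq, hfPval q.1 (hfP q.1 hq)] at this
              exact this
            have h16 : 16 * r (pc q.1 hq) ≤ dist (pc q.1 hq).val (f x) :=
              hrC (pc q.1 hq) (f x) hfxC
            have htri1 : dist (pc q.1 hq).val (f x) ≤
                dist (pc q.1 hq).val (f q.1) + dist (f q.1) (f x) := dist_triangle _ _ _
            have htri2 : dist (F q) (f x) ≤
                dist (F q) (pc q.1 hq).val + dist (pc q.1 hq).val (f q.1) +
                dist (f q.1) (f x) := dist_triangle4 _ _ _ _
            rw [dist_comm (pc q.1 hq).val (f q.1)] at htri1 htri2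
            linarith
          · -- f x outside the closure: no nearby points off A
            have hFalse : ∀ᶠ q in l, False := by
              have h1 : ∀ᶠ q in l, f q.1 ∉ closure P := by
                have htf : Tendsto (fun q : X × unitInterval => f q.1) l (𝓝 (f x)) :=
                  ((hf.comp continuous_fst).tendsto _).mono_left nhdsWithin_le_nhds
                exact htf (isClosed_closure.isOpen_compl.mem_nhds hfxcl)
              filter_upwards [ev, h1] with q hq h1q
              exact h1q (subset_closure (hfP q.1 hq))
            rw [Filter.eventually_false_iff_eq_bot] at hFalse
            rw [hFalse]
            exact tendsto_bot
    · -- interior of the complement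
      have hΦca : ContinuousAt
          (fun q : X × unitInterval => ((fP q.1, gPm q.1), q.2)) (x, t) := by
        have hevA : ∀ᶠ y in 𝓝 x, y ∉ A := hA.isOpen_compl.mem_nhds hx
        have hfPt : Tendsto fP (𝓝 x) (𝓝 (fP x)) := by
          rw [hfPeq x (hfP x hx)]
          exact subt f fP hfPval _ x (hfP x hx) hf.continuousAt
            (hevA.mono fun y hy => hfP y hy)
        have hgPt : Tendsto gPm (𝓝 x) (𝓝 (gPm x)) := by
          rw [hgPeq x (hgP x hx)]
          exact subt g gPm hgPval _ x (hgP x hx) hg.continuousAt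
            (hevA.mono fun y hy => hgP y hy)
        exact (((hfPt.comp (continuous_fst.tendsto _)).prodMk_nhds
          (hgPt.comp (continuous_fst.tendsto _))).prodMk_nhds
          (continuous_snd.tendsto _))
      have hMca := hMat (fP x, gPm x) (hΦΩ x hx) t
      have hco : ContinuousAt (fun q : X × unitInterval => M ((fP q.1, gPm q.1), q.2))
          (x, t) := Filter.Tendsto.comp hMca hΦca
      refine hco.congr ?_
      filter_upwards [(hA.isOpen_compl.prod isOpen_univ).mem_nhds (⟨hx, trivial⟩ :
        (x, t) ∈ (Aᶜ : Set X) ×ˢ (univ : Set unitInterval))] with q hq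
      simp only [hFdef]
      rw [if_neg hq.1]
  · -- tracks
    intro x
    by_cases hx : x ∈ A
    · exact Or.inl fun s t => by simp [hFdef, hx]
    · refine Or.inr ⟨Subtype.val '' U (pc x hx), ⟨U (pc x hx), hU𝒰 (pc x hx), rfl⟩, ?_⟩
      intro t
      have : F (x, t) = (lam (⟨(fP x, gPm x), hΦΩ x hx⟩, t) : Y) := by
        simp only [hFdef]
        rw [if_neg hx]
        exact hMe _ (hΦΩ x hx) t
      rw [this]
      exact mem_image_of_mem _ (hballU (pc x hx) (htr x hx t))
  · -- F (x, 0) = f x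
    intro x
    by_cases hx : x ∈ A
    · simp [hFdef, hx]
    · have : F (x, 0) = (lam (⟨(fP x, gPm x), hΦΩ x hx⟩, 0) : Y) := by
        simp only [hFdef]; rw [if_neg hx]; exact hMe _ (hΦΩ x hx) 0
      rw [this, hlam0]
      exact hfPval x (hfP x hx)
  · -- F (x, 1) = g x
    intro x
    by_cases hx : x ∈ A
    · simp only [hFdef]
      rw [if_pos hx]
      exact (hgA x hx).symm
    · have : F (x, 1) = (lam (⟨(fP x, gPm x), hΦΩ x hx⟩, 1) : Y) := by
        simp only [hFdef]; rw [if_neg hx]; exact hMe _ (hΦΩ x hx) 1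
      rw [this, hlam1]
      exact hgPval x (hgP x hx)
  · -- rel A
    intro a ha t
    simp [hFdef, ha]
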